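/- Let φ ∈ C(I×E) and let κ be a randomized stopping time. Then Dynkin's formula holds in expectation: Σ_{t=0}^T E[φ(t, X_t) κ({t})] = E[φ(0, X₀)] + Σ_{t=0}^{T−1} E[ L(φ)(t, X_t) κ({t+1,…,T}) ]. -/

import Mathlib

open MeasureTheory ProbabilityTheory
open scoped NNReal ENNReal

section Aux

lemma dynkin_bdd_integrable {Ω : Type*} [m0 : MeasurableSpace Ω] (μ : Measure Ω)
    [IsFiniteMeasure μ] {f : Ω → ℝ} (hf : AEStronglyMeasurable f μ) (C : ℝ)
    (hC : ∀ ω, ‖f ω‖ ≤ C) : Integrable f μ :=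
  ⟨hf, HasFiniteIntegral.of_bounded (ae_of_all _ hC)⟩

lemma dynkin_kernel_int_sm {E : Type*} [MeasurableSpace E] (πt : Kernel E E)
    [IsSFiniteKernel πt] (f : E → ℝ) (hf : StronglyMeasurable f) :
    StronglyMeasurable fun x => ∫ y, f y ∂(πt x) :=
  StronglyMeasurable.integral_kernel_prod_right
    (f := fun _ y => f y) (hf.comp_measurable measurable_snd)

lemma dynkin_kernel_int_bound {E : Type*} [MeasurableSpace E] (πt : Kernel E E)
    [IsMarkovKernel πt] (f : E → ℝ) (C : ℝ) (hC : ∀ x, ‖f x‖ ≤ C) (x : E) :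
    ‖∫ y, f y ∂(πt x)‖ ≤ C := by
  calc ‖∫ y, f y ∂(πt x)‖ ≤ ∫ _, C ∂(πt x) :=
        norm_integral_le_of_norm_le (integrable_const C) (ae_of_all _ hC)
    _ = C := by simp

lemma dynkin_markov_step {Ω E : Type*} [m0 : MeasurableSpace Ω]
    [MetricSpace E] [MeasurableSpace E] [BorelSpace E]
    (μ : Measure Ω) [IsProbabilityMeasure μ]
    (ℱ : MeasureTheory.Filtration ℕ m0) (t : ℕ)
    (Xt Xt1 : Ω → E) (hXt : Measurable Xt) (hXt1 : Measurable Xt1)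
    (πt : Kernel E E) [IsMarkovKernel πt]
    (hM : ∀ B : Set E, MeasurableSet B →
      (μ[Set.indicator {ω | Xt1 ω ∈ B} (fun _ => (1 : ℝ)) | ℱ t]
        =ᵐ[μ] fun ω => (πt (Xt ω) B).toReal))
    (h : Ω → ℝ) (h_meas : Measurable[ℱ t] h) (h_bdd : ∀ ω, ‖h ω‖ ≤ 1)
    (ψ : E → ℝ) (hψm : Measurable ψ) (C : ℝ) (hC : ∀ x, ‖ψ x‖ ≤ C) :
    ∫ ω, ψ (Xt1 ω) * h ω ∂μ = ∫ ω, (∫ y, ψ y ∂(πt (Xt ω))) * h ω ∂μ := by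
  have hm0 : Measurable h := h_meas.mono (ℱ.le t) le_rfl
  have h_sm : StronglyMeasurable[ℱ t] h := h_meas.stronglyMeasurable
  -- Step A: indicators
  have hA : ∀ B : Set E, MeasurableSet B →
      ∫ ω, Set.indicator B (fun _ => (1:ℝ)) (Xt1 ω) * h ω ∂μ
        = ∫ ω, (πt (Xt ω) B).toReal * h ω ∂μ := by
    intro B hB
    have hB' : MeasurableSet {ω | Xt1 ω ∈ B} := hXt1 hB
    set g : Ω → ℝ := Set.indicator {ω | Xt1 ω ∈ B} (fun _ => (1:ℝ)) with hg
    have hg_meas : Measurable g := measurable_const.indicator hB'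
    have hg_bdd : ∀ ω, ‖g ω‖ ≤ 1 := by
      intro ω; rw [hg]
      by_cases hω : ω ∈ {ω | Xt1 ω ∈ B} <;>
        simp [Set.indicator_apply, hω]
    have hg_int : Integrable g μ := dynkin_bdd_integrable μ hg_meas.aestronglyMeasurable 1 hg_bdd
    have hhg_int : Integrable (h * g) μ := by
      refine dynkin_bdd_integrable μ (hm0.mul hg_meas).aestronglyMeasurable 1 ?_
      intro ω
      calc ‖h ω * g ω‖ = ‖h ω‖ * ‖g ω‖ := norm_mul _ _
        _ ≤ 1 * 1 := mul_le_mul (h_bdd ω) (hg_bdd ω) (norm_nonneg _) zero_le_one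
        _ = 1 := one_mul 1
    have h1 : ∀ ω, Set.indicator B (fun _ => (1:ℝ)) (Xt1 ω) * h ω = (h * g) ω := by
      intro ω; simp only [Pi.mul_apply, hg, Set.indicator_apply, Set.mem_setOf_eq]
      by_cases hω : Xt1 ω ∈ B <;> simp [hω]
    rw [integral_congr_ae (ae_of_all _ h1)]
    rw [← integral_condExp (ℱ.le t) (f := h * g) (μ := μ)]
    have h2 : μ[h * g | ℱ t] =ᵐ[μ] fun ω => h ω * (πt (Xt ω) B).toReal := by
      refine (condExp_mul_of_stronglyMeasurable_left h_sm hhg_int hg_int).trans ?_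
      filter_upwards [hM B hB] with ω hω
      simp only [Pi.mul_apply, hg, hω]
    rw [integral_congr_ae h2]
    exact integral_congr_ae (ae_of_all _ fun ω => mul_comm _ _)
  -- generic integrability: bounded measurable functions times h
  have bint : ∀ (f : Ω → ℝ), Measurable f → ∀ D : ℝ, (∀ ω, ‖f ω‖ ≤ D) →
      Integrable (fun ω => f ω * h ω) μ := by
    intro f hf D hD
    refine ⟨(hf.mul hm0).aestronglyMeasurable,
      HasFiniteIntegral.of_bounded (C := D) (ae_of_all _ ?_)⟩
    intro ω
    calc ‖f ω * h ω‖ = ‖f ω‖ * ‖h ω‖ := norm_mul _ _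
      _ ≤ D * 1 := mul_le_mul (hD ω) (h_bdd ω) (norm_nonneg _)
          ((norm_nonneg (f ω)).trans (hD ω))
      _ = D := mul_one D
  have kmeas : ∀ (f : E → ℝ), StronglyMeasurable f →
      StronglyMeasurable fun x => ∫ y, f y ∂(πt x) := fun f hf =>
    dynkin_kernel_int_sm πt f hf
  -- Step B: simple functions
  have hB : ∀ s : SimpleFunc E ℝ,
      ∫ ω, s (Xt1 ω) * h ω ∂μ = ∫ ω, (∫ y, s y ∂(πt (Xt ω))) * h ω ∂μ := by
    intro s
    induction s using MeasureTheory.SimpleFunc.induction with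
    | @const c B hB =>
      have e1 : ∀ x : E, (SimpleFunc.piecewise B hB (SimpleFunc.const E c)
          (SimpleFunc.const E 0)) x = c * Set.indicator B (fun _ => (1:ℝ)) x := by
        intro x
        simp [SimpleFunc.piecewise_apply, Set.indicator_apply]
        by_cases hx : x ∈ B <;> simp [hx]
      have e2 : ∀ x : E, ∫ y, (SimpleFunc.piecewise B hB (SimpleFunc.const E c)
          (SimpleFunc.const E 0)) y ∂(πt x) = c * (πt x B).toReal := by
        intro x
        rw [integral_congr_ae (ae_of_all _ e1)]
        rw [integral_const_mul]
        congr 1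
        have : (fun y => Set.indicator B (fun _ => (1:ℝ)) y) = B.indicator (fun _ => (1:ℝ)) := rfl
        rw [this, integral_indicator_const (1:ℝ) hB]
        simp
        rfl
      calc ∫ ω, (SimpleFunc.piecewise B hB (SimpleFunc.const E c)
            (SimpleFunc.const E 0)) (Xt1 ω) * h ω ∂μ
          = ∫ ω, c * (Set.indicator B (fun _ => (1:ℝ)) (Xt1 ω) * h ω) ∂μ := by
            refine integral_congr_ae (ae_of_all _ fun ω => ?_); dsimp only; rw [e1]; ring
        _ = c * ∫ ω, Set.indicator B (fun _ => (1:ℝ)) (Xt1 ω) * h ω ∂μ := integral_const_mul c _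
        _ = c * ∫ ω, (πt (Xt ω) B).toReal * h ω ∂μ := by rw [hA B hB]
        _ = ∫ ω, c * ((πt (Xt ω) B).toReal * h ω) ∂μ := (integral_const_mul c _).symm
        _ = ∫ ω, (∫ y, (SimpleFunc.piecewise B hB (SimpleFunc.const E c)
              (SimpleFunc.const E 0)) y ∂(πt (Xt ω))) * h ω ∂μ := by
            refine integral_congr_ae (ae_of_all _ fun ω => ?_); dsimp only; rw [e2]; ring
    | @add f g hdisj hf hg =>
      obtain ⟨Cf, hCf⟩ := f.exists_forall_norm_le
      obtain ⟨Cg, hCg⟩ := g.exists_forall_norm_le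
      have hfm : Measurable (f : E → ℝ) := f.measurable
      have hgm : Measurable (g : E → ℝ) := g.measurable
      have hint_f : ∀ x : E, Integrable (f : E → ℝ) (πt x) := fun x =>
        ⟨f.stronglyMeasurable.aestronglyMeasurable,
          HasFiniteIntegral.of_bounded (ae_of_all _ hCf)⟩
      have hint_g : ∀ x : E, Integrable (g : E → ℝ) (πt x) := fun x =>
        ⟨g.stronglyMeasurable.aestronglyMeasurable,
          HasFiniteIntegral.of_bounded (ae_of_all _ hCg)⟩
      have hkf : ∀ x, ‖∫ y, (f : E → ℝ) y ∂(πt x)‖ ≤ Cf := fun x =>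
        dynkin_kernel_int_bound πt _ Cf hCf x
      have hkg : ∀ x, ‖∫ y, (g : E → ℝ) y ∂(πt x)‖ ≤ Cg := fun x =>
        dynkin_kernel_int_bound πt _ Cg hCg x
      calc ∫ ω, (f + g) (Xt1 ω) * h ω ∂μ
          = ∫ ω, ((f : E → ℝ) (Xt1 ω) * h ω + (g : E → ℝ) (Xt1 ω) * h ω) ∂μ := by
            refine integral_congr_ae (ae_of_all _ fun ω => ?_)
            simp [SimpleFunc.coe_add]; ring
        _ = (∫ ω, (f : E → ℝ) (Xt1 ω) * h ω ∂μ) + ∫ ω, (g : E → ℝ) (Xt1 ω) * h ω ∂μ :=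
            integral_add (bint _ (hfm.comp hXt1) Cf (fun ω => hCf _))
              (bint _ (hgm.comp hXt1) Cg (fun ω => hCg _))
        _ = (∫ ω, (∫ y, (f : E → ℝ) y ∂(πt (Xt ω))) * h ω ∂μ)
              + ∫ ω, (∫ y, (g : E → ℝ) y ∂(πt (Xt ω))) * h ω ∂μ := by rw [hf, hg]
        _ = ∫ ω, ((∫ y, (f : E → ℝ) y ∂(πt (Xt ω))) * h ω
              + (∫ y, (g : E → ℝ) y ∂(πt (Xt ω))) * h ω) ∂μ := by
            refine (integral_add ?_ ?_).symm
            · exact bint _ ((kmeas _ f.stronglyMeasurable).measurable.comp hXt) Cf (fun ω => hkf _)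
            · exact bint _ ((kmeas _ g.stronglyMeasurable).measurable.comp hXt) Cg (fun ω => hkg _)
        _ = ∫ ω, (∫ y, (f + g : SimpleFunc E ℝ) y ∂(πt (Xt ω))) * h ω ∂μ := by
            refine integral_congr_ae (ae_of_all _ fun ω => ?_)
            dsimp only
            rw [← add_mul]
            congr 1
            rw [← integral_add (hint_f _) (hint_g _)]
            refine integral_congr_ae (ae_of_all _ fun y => ?_)
            simp [SimpleFunc.coe_add]
  -- Step C: approximation
  set sf : ℕ → SimpleFunc E ℝ :=
    fun n => SimpleFunc.approxOn ψ hψm Set.univ 0 (Set.mem_univ 0) n with hsf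
  have htend : ∀ x, Filter.Tendsto (fun n => sf n x) Filter.atTop (nhds (ψ x)) := fun x =>
    SimpleFunc.tendsto_approxOn hψm (Set.mem_univ 0) (by simp)
  have hnorm : ∀ n x, ‖sf n x‖ ≤ C + C := fun n x =>
    (SimpleFunc.norm_approxOn_zero_le hψm (Set.mem_univ 0) x n).trans
      (add_le_add (hC x) (hC x))
  have hint_sf : ∀ n (x : E), Integrable (sf n : E → ℝ) (πt x) := fun n x =>
    ⟨(sf n).stronglyMeasurable.aestronglyMeasurable,
      HasFiniteIntegral.of_bounded (ae_of_all _ (hnorm n))⟩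
  have hL : Filter.Tendsto (fun n => ∫ ω, sf n (Xt1 ω) * h ω ∂μ) Filter.atTop
      (nhds (∫ ω, ψ (Xt1 ω) * h ω ∂μ)) := by
    refine tendsto_integral_of_dominated_convergence (fun _ => C + C)
      (fun n => (((sf n).measurable.comp hXt1).mul hm0).aestronglyMeasurable)
      (integrable_const _) (fun n => ae_of_all _ fun ω => ?_)
      (ae_of_all _ fun ω => (htend (Xt1 ω)).mul_const (h ω))
    calc ‖sf n (Xt1 ω) * h ω‖ = ‖sf n (Xt1 ω)‖ * ‖h ω‖ := norm_mul _ _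
      _ ≤ (C + C) * 1 := mul_le_mul (hnorm n _) (h_bdd ω) (norm_nonneg _)
          ((norm_nonneg _).trans (hnorm n (Xt1 ω)))
      _ = C + C := mul_one _
  have hInner : ∀ x : E, Filter.Tendsto (fun n => ∫ y, sf n y ∂(πt x)) Filter.atTop
      (nhds (∫ y, ψ y ∂(πt x))) := by
    intro x
    refine tendsto_integral_of_dominated_convergence (fun _ => C + C)
      (fun n => (sf n).stronglyMeasurable.aestronglyMeasurable)
      (integrable_const _) (fun n => ae_of_all _ fun y => hnorm n y)
      (ae_of_all _ fun y => htend y)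
  have hkbound : ∀ n (x : E), ‖∫ y, sf n y ∂(πt x)‖ ≤ C + C := fun n x =>
    dynkin_kernel_int_bound πt _ (C + C) (hnorm n) x
  have hR : Filter.Tendsto (fun n => ∫ ω, (∫ y, sf n y ∂(πt (Xt ω))) * h ω ∂μ) Filter.atTop
      (nhds (∫ ω, (∫ y, ψ y ∂(πt (Xt ω))) * h ω ∂μ)) := by
    refine tendsto_integral_of_dominated_convergence (fun _ => C + C)
      (fun n => (((kmeas _ (sf n).stronglyMeasurable).measurable.comp hXt).mul
        hm0).aestronglyMeasurable)
      (integrable_const _) (fun n => ae_of_all _ fun ω => ?_)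
      (ae_of_all _ fun ω => (hInner (Xt ω)).mul_const (h ω))
    calc ‖(∫ y, sf n y ∂(πt (Xt ω))) * h ω‖
        = ‖∫ y, sf n y ∂(πt (Xt ω))‖ * ‖h ω‖ := norm_mul _ _
      _ ≤ (C + C) * 1 := mul_le_mul (hkbound n _) (h_bdd ω) (norm_nonneg _)
          ((norm_nonneg _).trans (hkbound n (Xt ω)))
      _ = C + C := mul_one _
  have heq : (fun n => ∫ ω, sf n (Xt1 ω) * h ω ∂μ)
      = fun n => ∫ ω, (∫ y, sf n y ∂(πt (Xt ω))) * h ω ∂μ := funext fun n => hB (sf n)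
  rw [heq] at hL
  exact tendsto_nhds_unique hL hR

end Aux

/- STATEMENT 18: Dynkin's formula for randomized stopping times.
X is an (F_t)-Markov chain on a compact metric space E with transition kernels
(π_t)_{t ∈ I*}, I = {0,…,T}.  κ is a randomized stopping time: a kernel from Ω
to I = {0,…,T} (probability measures on ℕ supported in {0,…,T}) such that for
every t and every B in σ({0},…,{t}), ω ↦ κ(ω)(B) is F_t-measurable.
L(φ)(t,x) = ∫ φ(t+1,x') π_{t+1}(x,dx') − φ(t,x). -/
theorem stmt_18
    {Ω E : Type*} [m0 : MeasurableSpace Ω]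
    [MetricSpace E] [CompactSpace E] [MeasurableSpace E] [BorelSpace E]
    (μ : Measure Ω) [IsProbabilityMeasure μ]
    (T : ℕ) (hT : 1 ≤ T)
    (ℱ : MeasureTheory.Filtration ℕ m0)
    (X : ℕ → Ω → E)
    (hX_adapted : ∀ t, t ≤ T → Measurable[ℱ t] (X t))
    (π : ℕ → Kernel E E) (hπ : ∀ t, IsMarkovKernel (π t))
    -- Markov property of X with respect to (F_t) and kernels (π_t):
    (hMarkov : ∀ t : ℕ, 1 ≤ t → t ≤ T → ∀ B : Set E, MeasurableSet B →
      (μ[Set.indicator {ω | X t ω ∈ B} (fun _ => (1 : ℝ)) | ℱ (t - 1)]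
        =ᵐ[μ] fun ω => (π t (X (t - 1) ω) B).toReal))
    -- κ is a randomized stopping time:
    (κ : Ω → Measure ℕ)
    (hκ_prob : ∀ ω, IsProbabilityMeasure (κ ω))
    (hκ_supp : ∀ ω, κ ω (Set.Iic T) = 1)
    (hκ_meas : ∀ t : ℕ, t ≤ T → ∀ B : Set ℕ,
      MeasurableSet[MeasurableSpace.generateFrom {S : Set ℕ | ∃ s ≤ t, S = {s}}] B →
      Measurable[ℱ t] (fun ω => κ ω B))
    -- test function φ ∈ C(I × E):
    (φ : ℕ → E → ℝ) (hφ : ∀ t, Continuous (φ t)) :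
    ∑ t ∈ Finset.range (T + 1), ∫ ω, φ t (X t ω) * (κ ω {t}).toReal ∂μ
      = (∫ ω, φ 0 (X 0 ω) ∂μ)
        + ∑ t ∈ Finset.range T,
            ∫ ω, ((∫ y, φ (t + 1) y ∂(π (t + 1) (X t ω))) - φ t (X t ω))
                  * (κ ω (Set.Icc (t + 1) T)).toReal ∂μ := by
  -- bounds for φ
  have hCb : ∀ t : ℕ, ∃ C : ℝ, ∀ x, ‖φ t x‖ ≤ C := by
    intro t
    obtain ⟨C, hC⟩ := isCompact_univ.exists_bound_of_continuousOn (hφ t).continuousOn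
    exact ⟨C, fun x => hC x (Set.mem_univ x)⟩
  choose Cb hCb using hCb
  -- measurability of X
  have hXm : ∀ t, t ≤ T → Measurable (X t) := fun t ht =>
    (hX_adapted t ht).mono (ℱ.le t) le_rfl
  -- κ facts
  have hNmeas : ∀ s : Set ℕ, MeasurableSet s := fun s => MeasurableSpace.measurableSet_top
  have hsub : ∀ t : ℕ, t ≤ T → ∀ ω, (κ ω (Set.Icc (t + 1) T)).toReal
      = 1 - (κ ω (Set.Iic t)).toReal := by
    intro t ht ω
    haveI := hκ_prob ω
    have hset : Set.Icc (t + 1) T = Set.Iic T \ Set.Iic t := by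
      ext n; simp only [Set.mem_Icc, Set.mem_diff, Set.mem_Iic]; omega
    rw [hset, measure_diff (Set.Iic_subset_Iic.mpr ht) (hNmeas _).nullMeasurableSet
      (measure_ne_top _ _), hκ_supp ω,
      ENNReal.toReal_sub_of_le (le_trans (measure_mono (Set.Iic_subset_Iic.mpr ht))
        (le_of_eq (hκ_supp ω))) ENNReal.one_ne_top, ENNReal.toReal_one]
  have hIic_gen : ∀ t : ℕ,
      MeasurableSet[MeasurableSpace.generateFrom {S : Set ℕ | ∃ s ≤ t, S = {s}}]
        (Set.Iic t) := by
    intro t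
    have : Set.Iic t = ⋃ s ∈ Set.Iic t, {s} := by ext n; simp
    rw [this]
    exact MeasurableSet.biUnion (Set.to_countable _)
      (fun s hs => MeasurableSpace.measurableSet_generateFrom ⟨s, hs, rfl⟩)
  have hκIic : ∀ t : ℕ, t ≤ T → Measurable[ℱ t] fun ω => (κ ω (Set.Iic t)).toReal :=
    fun t ht => (hκ_meas t ht _ (hIic_gen t)).ennreal_toReal
  have hG_meas : ∀ t : ℕ, t ≤ T →
      Measurable[ℱ t] fun ω => (κ ω (Set.Icc (t + 1) T)).toReal := by
    intro t ht
    have : (fun ω => (κ ω (Set.Icc (t + 1) T)).toReal)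
        = fun ω => 1 - (κ ω (Set.Iic t)).toReal := funext (hsub t ht)
    rw [this]
    exact measurable_const.sub (hκIic t ht)
  have hG_m0 : ∀ s : ℕ, s ≤ T + 1 → Measurable fun ω => (κ ω (Set.Icc s T)).toReal := by
    intro s hs
    match s, hs with
    | 0, _ =>
      have : (fun ω => (κ ω (Set.Icc 0 T)).toReal) = fun _ => (1 : ℝ) := by
        funext ω
        have : Set.Icc 0 T = Set.Iic T := by ext n; simp
        rw [this, hκ_supp ω, ENNReal.toReal_one]
      rw [this]; exact measurable_const
    | t + 1, hs =>
      exact (hG_meas t (by omega)).mono (ℱ.le t) le_rfl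
  have hG_bdd : ∀ (s : Set ℕ) ω, ‖(κ ω s).toReal‖ ≤ 1 := by
    intro s ω
    haveI := hκ_prob ω
    rw [Real.norm_eq_abs, abs_of_nonneg ENNReal.toReal_nonneg]
    calc (κ ω s).toReal ≤ (1 : ℝ≥0∞).toReal :=
          ENNReal.toReal_mono ENNReal.one_ne_top prob_le_one
      _ = 1 := ENNReal.toReal_one
  have hsingle : ∀ t : ℕ, t ≤ T → ∀ ω, (κ ω {t}).toReal
      = (κ ω (Set.Icc t T)).toReal - (κ ω (Set.Icc (t + 1) T)).toReal := by
    intro t ht ω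
    haveI := hκ_prob ω
    have hu : Set.Icc t T = {t} ∪ Set.Icc (t + 1) T := by
      ext n; simp only [Set.mem_Icc, Set.mem_union, Set.mem_singleton_iff]; omega
    have hd : Disjoint ({t} : Set ℕ) (Set.Icc (t + 1) T) := by
      rw [Set.disjoint_left]
      intro n hn hn'
      simp only [Set.mem_singleton_iff] at hn
      simp only [Set.mem_Icc] at hn'
      omega
    rw [hu, measure_union hd (hNmeas _),
      ENNReal.toReal_add (measure_ne_top _ _) (measure_ne_top _ _)]
    ring
  have hG0 : ∀ ω, (κ ω (Set.Icc 0 T)).toReal = 1 := by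
    intro ω
    have : Set.Icc 0 T = Set.Iic T := by ext n; simp
    rw [this, hκ_supp ω, ENNReal.toReal_one]
  have hGT1 : ∀ ω, (κ ω (Set.Icc (T + 1) T)).toReal = 0 := by
    intro ω
    rw [Set.Icc_eq_empty (by omega), measure_empty, ENNReal.toReal_zero]
  -- integrability helper
  have bint : ∀ (f : Ω → ℝ), Measurable f → ∀ D : ℝ, (∀ ω, ‖f ω‖ ≤ D) →
      ∀ s : ℕ, s ≤ T + 1 → Integrable (fun ω => f ω * (κ ω (Set.Icc s T)).toReal) μ := by
    intro f hf D hD s hs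
    refine ⟨(hf.mul (hG_m0 s hs)).aestronglyMeasurable,
      HasFiniteIntegral.of_bounded (C := D) (ae_of_all _ ?_)⟩
    intro ω
    calc ‖f ω * (κ ω (Set.Icc s T)).toReal‖
        = ‖f ω‖ * ‖(κ ω (Set.Icc s T)).toReal‖ := norm_mul _ _
      _ ≤ D * 1 := mul_le_mul (hD ω) (hG_bdd _ ω) (norm_nonneg _)
          ((norm_nonneg (f ω)).trans (hD ω))
      _ = D := mul_one D
  -- notation
  set A : ℕ → ℝ := fun t => ∫ ω, φ t (X t ω) * (κ ω (Set.Icc t T)).toReal ∂μ with hA_def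
  set B : ℕ → ℝ := fun t => ∫ ω, φ t (X t ω) * (κ ω (Set.Icc (t + 1) T)).toReal ∂μ with hB_def
  -- split each term
  have hf_meas : ∀ t, t ≤ T → Measurable fun ω => φ t (X t ω) := fun t ht =>
    (hφ t).measurable.comp (hXm t ht)
  have step1 : ∀ t ∈ Finset.range (T + 1),
      ∫ ω, φ t (X t ω) * (κ ω {t}).toReal ∂μ = A t - B t := by
    intro t ht
    rw [Finset.mem_range] at ht
    have ht' : t ≤ T := by omega
    have hpt : ∀ ω, φ t (X t ω) * (κ ω {t}).toReal
        = φ t (X t ω) * (κ ω (Set.Icc t T)).toReal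
          - φ t (X t ω) * (κ ω (Set.Icc (t + 1) T)).toReal := by
      intro ω; rw [hsingle t ht' ω]; ring
    rw [integral_congr_ae (ae_of_all _ hpt)]
    exact integral_sub
      (bint _ (hf_meas t ht') (Cb t) (fun ω => hCb t _) t (by omega))
      (bint _ (hf_meas t ht') (Cb t) (fun ω => hCb t _) (t + 1) (by omega))
  have hA0 : A 0 = ∫ ω, φ 0 (X 0 ω) ∂μ := by
    rw [hA_def]
    refine integral_congr_ae (ae_of_all _ fun ω => ?_)
    dsimp only
    rw [hG0 ω, mul_one]
  have hBT : B T = 0 := by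
    rw [hB_def]
    have : ∀ ω, φ T (X T ω) * (κ ω (Set.Icc (T + 1) T)).toReal = 0 := by
      intro ω; rw [hGT1 ω, mul_zero]
    dsimp only
    rw [integral_congr_ae (ae_of_all _ this), integral_zero]
  -- the key Markov step
  have step3 : ∀ t ∈ Finset.range T,
      ∫ ω, ((∫ y, φ (t + 1) y ∂(π (t + 1) (X t ω))) - φ t (X t ω))
          * (κ ω (Set.Icc (t + 1) T)).toReal ∂μ = A (t + 1) - B t := by
    intro t ht
    rw [Finset.mem_range] at ht
    have ht1 : t + 1 ≤ T := by omega
    haveI := hπ (t + 1)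
    have hψm : Measurable (φ (t + 1)) := (hφ (t + 1)).measurable
    have hkm : StronglyMeasurable fun x => ∫ y, φ (t + 1) y ∂(π (t + 1) x) :=
      dynkin_kernel_int_sm (π (t + 1)) _ (hφ (t + 1)).stronglyMeasurable
    have hkb : ∀ x, ‖∫ y, φ (t + 1) y ∂(π (t + 1) x)‖ ≤ Cb (t + 1) := fun x =>
      dynkin_kernel_int_bound (π (t + 1)) _ (Cb (t + 1)) (hCb (t + 1)) x
    have hmul : ∀ ω, ((∫ y, φ (t + 1) y ∂(π (t + 1) (X t ω))) - φ t (X t ω))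
        * (κ ω (Set.Icc (t + 1) T)).toReal
        = (∫ y, φ (t + 1) y ∂(π (t + 1) (X t ω))) * (κ ω (Set.Icc (t + 1) T)).toReal
          - φ t (X t ω) * (κ ω (Set.Icc (t + 1) T)).toReal := fun ω => sub_mul _ _ _
    rw [integral_congr_ae (ae_of_all _ hmul)]
    rw [integral_sub
      (bint (fun ω => ∫ y, φ (t + 1) y ∂(π (t + 1) (X t ω)))
        (hkm.measurable.comp (hXm t (by omega))) (Cb (t + 1)) (fun ω => hkb _)
        (t + 1) (by omega))
      (bint _ (hf_meas t (by omega)) (Cb t) (fun ω => hCb t _) (t + 1) (by omega))]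
    have hkey : A (t + 1)
        = ∫ ω, (∫ y, φ (t + 1) y ∂(π (t + 1) (X t ω))) * (κ ω (Set.Icc (t + 1) T)).toReal ∂μ := by
      rw [hA_def]
      exact dynkin_markov_step μ ℱ t (X t) (X (t + 1)) (hXm t (by omega)) (hXm (t + 1) ht1)
        (π (t + 1))
        (fun Bs hBs => by simpa using hMarkov (t + 1) (by omega) ht1 Bs hBs)
        (fun ω => (κ ω (Set.Icc (t + 1) T)).toReal) (hG_meas t (by omega))
        (fun ω => hG_bdd _ ω) (φ (t + 1)) hψm (Cb (t + 1)) (hCb (t + 1))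
    rw [hkey]
  -- assemble
  calc ∑ t ∈ Finset.range (T + 1), ∫ ω, φ t (X t ω) * (κ ω {t}).toReal ∂μ
      = ∑ t ∈ Finset.range (T + 1), (A t - B t) := Finset.sum_congr rfl step1
    _ = (∑ t ∈ Finset.range (T + 1), A t) - ∑ t ∈ Finset.range (T + 1), B t :=
        Finset.sum_sub_distrib _ _
    _ = ((∑ t ∈ Finset.range T, A (t + 1)) + A 0)
        - ((∑ t ∈ Finset.range T, B t) + B T) := by
        rw [Finset.sum_range_succ', Finset.sum_range_succ]
    _ = (∫ ω, φ 0 (X 0 ω) ∂μ) + ∑ t ∈ Finset.range T, (A (t + 1) - B t) := by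
        rw [hA0, hBT, Finset.sum_sub_distrib]; ring
    _ = (∫ ω, φ 0 (X 0 ω) ∂μ)
        + ∑ t ∈ Finset.range T,
            ∫ ω, ((∫ y, φ (t + 1) y ∂(π (t + 1) (X t ω))) - φ t (X t ω))
                  * (κ ω (Set.Icc (t + 1) T)).toReal ∂μ := by
        rw [Finset.sum_congr rfl step3]
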